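/- Let w be a Sturmian word over the two-letter alphabet Σ = {x_0, x_1}, i.e. an infinite word with exactly n+1 distinct factors of length n for every n ≥ 1, and let A = A_w be the associated monomial algebra. Then every tree (C_i)_{i≥0} over A satisfies |C_0| ≤ 2 and |C_i| = 1 for all i ≥ 1, and there is exactly one tree (C_i)_{i≥0} over A with |C_0| = 2. -/

import Mathlib

noncomputable section

open scoped BigOperators

/-- The free associative `F`-algebra on `m` generators, realized as the monoid
algebra of the free monoid on `Fin m`. -/
abbrev FreeAlg (F : Type) [Field F] (m : ℕ) : Type :=
  MonoidAlgebra F (FreeMonoid (Fin m))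

variable (F : Type) [Field F] {m : ℕ}

/-- The element of the free algebra corresponding to a word `u`. -/
def wordElem (u : List (Fin m)) : FreeAlg F m :=
  MonoidAlgebra.of F (FreeMonoid (Fin m)) (FreeMonoid.ofList u)

/-- The relation identifying the forbidden words in `W` with `0`. -/
def monRel (W : Set (List (Fin m))) : FreeAlg F m → FreeAlg F m → Prop :=
  fun a b => (∃ u ∈ W, a = wordElem F u) ∧ b = 0

/-- The monomial algebra `F⟨x_1,…,x_m⟩/⟨W⟩` determined by the set `W` of forbidden
words. -/
abbrev MonAlg (W : Set (List (Fin m))) : Type :=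
  RingQuot (monRel F W)

/-- The canonical projection from the free algebra onto the monomial algebra. -/
def monAlgPi (W : Set (List (Fin m))) : FreeAlg F m →ₐ[F] MonAlg F W :=
  RingQuot.mkAlgHom F (monRel F W)

/-- The image of the word `u` in the monomial algebra; `u` is a *nonzero monomial*
of the monomial algebra iff `mono F W u ≠ 0`. -/
def mono (W : Set (List (Fin m))) (u : List (Fin m)) : MonAlg F W :=
  monAlgPi F W (wordElem F u)

/-- The degree-`d` homogeneous component of the monomial algebra, spanned by the
images of the words of length `d`. -/
def homog (W : Set (List (Fin m))) (d : ℕ) : Submodule F (MonAlg F W) :=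
  Submodule.span F { a | ∃ u : List (Fin m), u.length = d ∧ a = mono F W u }
/-- The set of finite factors (subwords) of the right-infinite word `w`. -/
def factorsOf (w : ℕ → Fin m) : Set (List (Fin m)) :=
  { u | ∃ i : ℕ, u = (List.range u.length).map fun k => w (i + k) }

/-- `w` is uniformly recurrent: every factor `u` of `w` occurs in every sufficiently
long factor of `w`. -/
def UniformlyRecurrent (w : ℕ → Fin m) : Prop :=
  ∀ u ∈ factorsOf w, ∃ C : ℕ, ∀ v ∈ factorsOf w, v.length = C → u <:+: v

/-- `w` is eventually periodic. -/
def EventuallyPeriodic (w : ℕ → Fin m) : Prop :=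
  ∃ p : ℕ, 0 < p ∧ ∃ N : ℕ, ∀ i : ℕ, N ≤ i → w (i + p) = w i
/-- The word `u`, read starting at position `i`, selects its letters from the
sequence of sets `C`. -/
def SelectsFrom (C : ℕ → Set (Fin m)) (i : ℕ) (u : List (Fin m)) : Prop :=
  ∀ (k : ℕ) (h : k < u.length), u.get ⟨k, h⟩ ∈ C (i + k)

/-- A tree over the monomial algebra with forbidden words `W`: a sequence of
nonempty subsets of the alphabet all of whose "segment words" are nonzero
monomials of the algebra. -/
def IsTree (W : Set (List (Fin m))) (C : ℕ → Set (Fin m)) : Prop :=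
  (∀ i, (C i).Nonempty) ∧
    ∀ (i : ℕ) (u : List (Fin m)), SelectsFrom C i u → mono F W u ≠ 0

namespace St18

variable {x : ℕ → Fin 2}

/-- the window of `x` of length `n` starting at `i` -/
def win (x : ℕ → Fin 2) (i n : ℕ) : List (Fin 2) :=
  (List.range n).map fun k => x (i + k)

@[simp] lemma length_win (i n : ℕ) : (win x i n).length = n := by
  simp [win]

@[simp] lemma getElem_win {i n k : ℕ} (h : k < (win x i n).length) :
    (win x i n)[k] = x (i + k) := by
  simp [win]

lemma win_zero (i : ℕ) : win x i 0 = [] := rfl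

lemma win_add (i n m : ℕ) : win x i (n + m) = win x i n ++ win x (i + n) m := by
  apply List.ext_getElem (by simp)
  intro k hk _
  rcases Nat.lt_or_ge k n with h | h
  · rw [List.getElem_append_left (by simpa using h)]
    simp
  · rw [List.getElem_append_right (by simpa using h)]
    simp only [getElem_win, length_win]
    congr 1
    omega

lemma win_succ_left (i n : ℕ) : win x i (n + 1) = x i :: win x (i + 1) n := by
  rw [show n + 1 = 1 + n by omega, win_add]
  rfl

lemma take_win (i n m : ℕ) : (win x i n).take m = win x i (min m n) := by
  apply List.ext_getElem (by simp)
  intro k hk hk'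
  simp

lemma drop_win (i n m : ℕ) : (win x i n).drop m = win x (i + m) (n - m) := by
  apply List.ext_getElem (by simp)
  intro k hk hk'
  simp only [List.getElem_drop, getElem_win, length_win]
  congr 1
  omega

lemma win_mem (i n : ℕ) : win x i n ∈ factorsOf x :=
  ⟨i, by simp [win]⟩

lemma mem_fac_iff {u : List (Fin 2)} :
    u ∈ factorsOf x ↔ ∃ i, u = win x i u.length := Iff.rfl

lemma fac_of_prefix {u z : List (Fin 2)} (h : u <+: z) (hz : z ∈ factorsOf x) :
    u ∈ factorsOf x := by
  obtain ⟨i, hz⟩ := hz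
  have hu : u = z.take u.length := by
    obtain ⟨t, ht⟩ := h
    rw [← ht]; simp
  rw [hu, hz, ← win, take_win, Nat.min_eq_left]
  · exact win_mem _ _
  · simpa using h.length_le
lemma fac_of_suffix {u z : List (Fin 2)} (h : u <:+ z) (hz : z ∈ factorsOf x) :
    u ∈ factorsOf x := by
  obtain ⟨i, hz⟩ := hz
  have hu : u = z.drop (z.length - u.length) := by
    obtain ⟨t, ht⟩ := h
    rw [← ht]; simp
  rw [hu, hz, ← win, drop_win, length_win]
  have h2 : z.length - (z.length - u.length) = u.length := by
    have := h.length_le; omega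
  rw [h2]
  exact win_mem _ _

lemma fac_of_infix {u z : List (Fin 2)} (h : u <:+: z) (hz : z ∈ factorsOf x) :
    u ∈ factorsOf x := by
  obtain ⟨s, t, hst⟩ := h
  have h1 : u ++ t <:+ z := by
    rw [← hst, List.append_assoc]; exact List.suffix_append s (u ++ t)
  exact fac_of_prefix (List.prefix_append u t) (fac_of_suffix h1 hz)


/-! ### counting -/

def Fn (x : ℕ → Fin 2) (n : ℕ) : Set (List (Fin 2)) :=
  {u | u ∈ factorsOf x ∧ u.length = n}

lemma fn_finite (n : ℕ) : (Fn x n).Finite := by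
  have : ∀ u ∈ Fn x n, u ∈ {l : List (Fin 2) | l.length = n} := fun u hu => hu.2
  apply Set.Finite.subset _ this
  have : {l : List (Fin 2) | l.length = n}.Finite := by
    apply List.finite_length_eq
  exact this

instance fn_finite' (n : ℕ) : Finite (Fn x n) := (fn_finite n).to_subtype

/-- complexity -/
def pc (x : ℕ → Fin 2) (n : ℕ) : ℕ := Nat.card (Fn x n)

lemma fn_zero : Fn x 0 = {([] : List (Fin 2))} := by
  ext u
  constructor
  · rintro ⟨_, h⟩; exact List.length_eq_zero_iff.mp h
  · rintro rfl; exact ⟨⟨0, rfl⟩, rfl⟩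

lemma pc_zero : pc x 0 = 1 := by
  rw [pc, fn_zero]; simp

lemma win_mem_fn (i n : ℕ) : win x i n ∈ Fn x n := ⟨win_mem i n, length_win i n⟩


lemma win_letters {i j k : ℕ} (h : win x i k = win x j k) {s : ℕ} (hs : s < k) :
    x (i + s) = x (j + s) := by
  have h1 : (win x i k)[s]'(by simp [hs]) = (win x j k)[s]'(by simp [hs]) :=
    List.getElem_of_eq h _
  simpa using h1

lemma nat_pigeon {α β : Type} [Finite α] [Finite β] (f : α → β)
    (h : Nat.card β < Nat.card α) : ∃ a b, a ≠ b ∧ f a = f b := by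
  have := Fintype.ofFinite α
  have := Fintype.ofFinite β
  rw [Nat.card_eq_fintype_card, Nat.card_eq_fintype_card] at h
  exact Fintype.exists_ne_map_eq_of_card_lt f h

lemma eq_of_card_le_one {α : Type} [Finite α] (h : Nat.card α ≤ 1) (a b : α) : a = b := by
  by_contra hab
  have hinj : Function.Injective (fun c : Bool => if c then a else b) := by
    intro c d hcd
    cases c <;> cases d <;> simp_all
  have := Nat.card_le_card_of_injective _ hinj
  simp [Nat.card_eq_fintype_card] at this
  omega

/-- the `take`-map from `Fn x (n+1)` to `Fn x n` -/
def tk (x : ℕ → Fin 2) (n : ℕ) : Fn x (n + 1) → Fn x n := fun u =>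
  ⟨u.val.take n, fac_of_prefix (List.take_prefix _ _) u.2.1, by simp [u.2.2]⟩

lemma tk_surj (n : ℕ) : Function.Surjective (tk x n) := by
  rintro ⟨v, hv⟩
  obtain ⟨i, hvi⟩ := hv.1
  refine ⟨⟨win x i (n + 1), win_mem_fn i (n + 1)⟩, ?_⟩
  apply Subtype.ext
  show (win x i (n+1)).take n = v
  rw [take_win, Nat.min_eq_left (by omega)]
  rw [hvi, hv.2]; rfl

lemma pc_mono (n : ℕ) : pc x n ≤ pc x (n + 1) :=
  Nat.card_le_card_of_surjective _ (tk_surj n)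

lemma pc_mono_le {n m : ℕ} (h : n ≤ m) : pc x n ≤ pc x m := by
  induction m with
  | zero => simp_all
  | succ m ih =>
    rcases Nat.lt_or_ge n (m+1) with h' | h'
    · exact le_trans (ih (by omega)) (pc_mono m)
    · have : n = m + 1 := by omega
      subst this; rfl

/-- Morse–Hedlund determinism step -/
lemma mh_step {k : ℕ} (h : pc x (k + 1) ≤ pc x k) : EventuallyPeriodic x := by
  rcases Nat.eq_zero_or_pos k with rfl | hk
  · -- x is constant
    have hcard : pc x 1 ≤ 1 := by
      have h0 := pc_zero (x := x)
      simpa [h0] using h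
    refine ⟨1, by omega, 0, fun i _ => ?_⟩
    have h1 : ∀ j : ℕ, ([x j] : List (Fin 2)) ∈ Fn x 1 := by
      intro j
      have : win x j 1 = [x j] := by simp [win, List.range_succ]
      rw [← this]; exact win_mem_fn _ _
    have := eq_of_card_le_one hcard ⟨[x (i+1)], h1 (i+1)⟩ ⟨[x i], h1 i⟩
    simpa using congrArg (fun l => l.val) this
  · have hbij : Function.Bijective (tk x k) :=
      (tk_surj k).bijective_of_nat_card_le h
    -- determinism
    have det : ∀ i j : ℕ, win x i k = win x j k → x (i + k) = x (j + k) := by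
      intro i j hij
      have h1 : tk x k ⟨win x i (k+1), win_mem_fn _ _⟩ = tk x k ⟨win x j (k+1), win_mem_fn _ _⟩ := by
        apply Subtype.ext
        show (win x i (k+1)).take k = (win x j (k+1)).take k
        rw [take_win, take_win, Nat.min_eq_left (by omega)]
        exact hij
      have h2 := hbij.1 h1
      have h3 : win x i (k+1) = win x j (k+1) := congrArg (fun u => u.val) h2
      have := win_letters h3 (s := k) (by omega)
      exact this
    -- pigeonhole on windows
    obtain ⟨a, b, hab, hfab⟩ := nat_pigeon
      (fun i : Fin (pc x k + 1) => (⟨win x i k, win_mem_fn _ _⟩ : Fn x k))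
      (by simp [pc, Nat.card_eq_fintype_card])
    have hwab : win x (a : ℕ) k = win x (b : ℕ) k := congrArg (fun u => u.val) hfab
    obtain ⟨i, j, hij, hw⟩ : ∃ i j : ℕ, i < j ∧ win x i k = win x j k := by
      rcases Nat.lt_or_ge (a : ℕ) (b : ℕ) with h' | h'
      · exact ⟨a, b, h', hwab⟩
      · have : (b : ℕ) < (a : ℕ) := by
          rcases Nat.lt_or_ge (b : ℕ) (a : ℕ) with h'' | h''
          · exact h''
          · exact absurd (Fin.ext (by omega)) hab
        exact ⟨b, a, this, hwab.symm⟩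
    have Q : ∀ t : ℕ, win x (i + t) k = win x (j + t) k := by
      intro t
      induction t with
      | zero => simpa using hw
      | succ t ih =>
        have hnew : x (i + t + k) = x (j + t + k) := det _ _ ih
        apply List.ext_getElem (by simp)
        intro s hs _
        simp only [getElem_win]
        have hs' : s < k := by simpa using hs
        have e1 : i + (t + 1) + s = i + t + (s + 1) := by omega
        have e2 : j + (t + 1) + s = j + t + (s + 1) := by omega
        rw [e1, e2]
        rcases Nat.lt_or_ge (s + 1) k with h' | h'
        · exact win_letters ih h'
        · have hsk : s + 1 = k := by omega
          rw [hsk]; exact hnew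
    refine ⟨j - i, by omega, i, fun s hs => ?_⟩
    have hlet : x (i + (s - i) + 0) = x (j + (s - i) + 0) := win_letters (Q (s - i)) hk
    have e1 : i + (s - i) + 0 = s := by omega
    have e2 : j + (s - i) + 0 = s + (j - i) := by omega
    rw [e1, e2] at hlet
    exact hlet.symm

lemma mh {m : ℕ} (hm : 1 ≤ m) (h : pc x m ≤ m) : EventuallyPeriodic x := by
  by_contra hne
  have step : ∀ k, k ≤ m → k + 1 ≤ pc x k := by
    intro k
    induction k with
    | zero => intro _; simp [pc_zero]
    | succ k ih =>
      intro hk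
      have h1 := ih (by omega)
      have h2 : ¬ (pc x (k+1) ≤ pc x k) := fun hc => hne (mh_step hc)
      omega
  have := step m (le_refl m)
  omega

lemma evp_pc_bound (h : EventuallyPeriodic x) : ∃ B, 0 < B ∧ ∀ n, pc x n ≤ B := by
  obtain ⟨p, hp, N, hper⟩ := h
  refine ⟨N + p, by omega, fun n => ?_⟩
  have red : ∀ i, ∃ i', i' < N + p ∧ win x i n = win x i' n := by
    intro i
    induction i using Nat.strong_induction_on with
    | _ i ih =>
      rcases Nat.lt_or_ge i (N + p) with h' | h'
      · exact ⟨i, h', rfl⟩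
      · have hwin : win x i n = win x (i - p) n := by
          apply List.ext_getElem (by simp)
          intro s hs _
          simp only [getElem_win]
          have := hper (i - p + s) (by omega)
          have e : i - p + s + p = i + s := by omega
          rw [e] at this
          exact this
        obtain ⟨i', hi', he⟩ := ih (i - p) (by omega)
        exact ⟨i', hi', hwin.trans he⟩
  have hg : ∀ u : Fn x n, ∃ i' : Fin (N + p), u.val = win x (i' : ℕ) n := by
    rintro ⟨u, hu⟩
    obtain ⟨i, hi⟩ := hu.1
    have hi' : u = win x i n := by rw [hu.2] at hi; exact hi
    obtain ⟨i'', hi'', he⟩ := red i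
    exact ⟨⟨i'', hi''⟩, hi'.trans he⟩
  obtain ⟨g, hgspec⟩ : ∃ g : Fn x n → Fin (N + p), ∀ u, u.val = win x ((g u : Fin (N+p)) : ℕ) n :=
    ⟨fun u => (hg u).choose, fun u => (hg u).choose_spec⟩
  have hinj : Function.Injective g := by
    intro u v huv
    apply Subtype.ext
    rw [hgspec u, hgspec v, huv]
  have := Nat.card_le_card_of_injective _ hinj
  simpa [pc] using this

section Sturm

variable {w : ℕ → Fin 2}
  (hs : ∀ n : ℕ, 1 ≤ n →
    Nat.card { u : List (Fin 2) // u ∈ factorsOf w ∧ u.length = n } = n + 1)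

include hs

lemma pc_w (n : ℕ) : pc w n = n + 1 := by
  rcases Nat.eq_zero_or_pos n with rfl | hn
  · exact pc_zero
  · exact hs n hn

lemma aperiodic : ¬ EventuallyPeriodic w := by
  intro h
  obtain ⟨B, hB, hbound⟩ := evp_pc_bound h
  have := hbound B
  rw [pc_w hs] at this
  omega

lemma recurrence {u : List (Fin 2)} (hu : u ∈ factorsOf w) (N : ℕ) :
    ∃ i, N ≤ i ∧ u = win w i u.length := by
  by_contra hc
  push_neg at hc
  rcases Nat.eq_zero_or_pos u.length with h0 | hm1
  · have : u = [] := List.length_eq_zero_iff.mp h0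
    subst this
    exact hc N (le_refl N) (by rw [h0]; exact (win_zero N).symm)
  · set m := u.length with hm
    set x' : ℕ → Fin 2 := fun j => w (N + j) with hx'
    have hsub : ∀ i n, win x' i n = win w (N + i) n := by
      intro i n
      apply List.ext_getElem (by simp)
      intro s hs' _
      simp only [getElem_win, hx']
      congr 1; omega
    have hnot : u ∉ Fn x' m := by
      rintro ⟨⟨i, hi⟩, _⟩
      have hi' : u = win x' i m := by rw [← hm] at hi; exact hi
      rw [hsub] at hi'
      exact hc (N + i) (by omega) hi'
    have hincl : ∀ v : List (Fin 2), v ∈ Fn x' m → v ∈ Fn w m := by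
      intro v hv
      obtain ⟨i, hi⟩ := hv.1
      have hi' : v = win x' i m := by rw [hv.2] at hi; exact hi
      rw [hsub] at hi'
      exact ⟨by rw [hi']; exact win_mem _ _, hv.2⟩
    have hinj : Function.Injective
        (Sum.elim (fun v : Fn x' m => (⟨v.val, hincl _ v.2⟩ : Fn w m))
          (fun _ : Unit => (⟨u, hu, rfl⟩ : Fn w m))) := by
      rintro (v₁ | v₁) (v₂ | v₂) hv
      · simp only [Sum.elim_inl] at hv
        rw [Subtype.mk.injEq] at hv
        exact congrArg Sum.inl (Subtype.ext hv)
      · simp only [Sum.elim_inl, Sum.elim_inr] at hv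
        simp only [Subtype.ext_iff] at hv
        exact absurd (hv ▸ v₁.2) hnot
      · simp only [Sum.elim_inl, Sum.elim_inr] at hv
        simp only [Subtype.ext_iff] at hv
        exact absurd (hv.symm ▸ v₂.2) hnot
      · cases v₁; cases v₂; rfl
    have hcard := Nat.card_le_card_of_injective _ hinj
    rw [Nat.card_sum] at hcard
    have hu1 : Nat.card Unit = 1 := Nat.card_unique
    rw [hu1] at hcard
    have h1 : pc x' m + 1 ≤ pc w m := hcard
    rw [pc_w hs] at h1
    have h2 : pc x' m ≤ m := by omega
    have hevp := mh hm1 h2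
    apply aperiodic hs
    obtain ⟨p, hp, N', hper⟩ := hevp
    refine ⟨p, hp, N + N', fun i hi => ?_⟩
    have := hper (i - N) (by omega)
    simp only [hx'] at this
    have e1 : N + (i - N + p) = i + p := by omega
    have e2 : N + (i - N) = i := by omega
    rw [e1, e2] at this
    exact this

lemma lext {u : List (Fin 2)} (hu : u ∈ factorsOf w) :
    ∃ c : Fin 2, (c :: u) ∈ factorsOf w := by
  obtain ⟨i, hi, he⟩ := recurrence hs hu 1
  refine ⟨w (i - 1), ?_⟩
  have : win w (i - 1) (u.length + 1) = w (i - 1) :: win w i u.length := by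
    rw [win_succ_left]
    congr 2
    omega
  rw [← he] at this
  rw [← this]
  exact win_mem _ _

end Sturm

/-- flip a letter -/
def flip (c : Fin 2) : Fin 2 := if c = 0 then 1 else 0

lemma flip_ne : ∀ c : Fin 2, flip c ≠ c := by decide

lemma eq_flip_of_ne : ∀ {a c : Fin 2}, a ≠ c → a = flip c := by decide

lemma fin2_cover : ∀ (a b c : Fin 2), a ≠ b → c = a ∨ c = b := by decide

/-- `u` is a left special factor -/
def IsLS (w : ℕ → Fin 2) (u : List (Fin 2)) : Prop :=
  ∀ c : Fin 2, (c :: u) ∈ factorsOf w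

lemma IsLS.mem {w : ℕ → Fin 2} {u : List (Fin 2)} (h : IsLS w u) : u ∈ factorsOf w :=
  fac_of_suffix (List.suffix_cons 0 u) (h 0)

section Sturm2

variable {w : ℕ → Fin 2}
  (hs : ∀ n : ℕ, 1 ≤ n →
    Nat.card { u : List (Fin 2) // u ∈ factorsOf w ∧ u.length = n } = n + 1)

include hs

lemma ls_exists (n : ℕ) : ∃ u, u.length = n ∧ IsLS w u := by
  have hcard : pc w n < pc w (n + 1) := by
    rw [pc_w hs, pc_w hs]; omega
  obtain ⟨a, b, hab, he⟩ := nat_pigeon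
    (fun v : Fn w (n + 1) => (⟨v.val.tail,
      fac_of_suffix (List.tail_suffix _) v.2.1, by
        simp [List.length_tail, v.2.2]⟩ : Fn w n)) hcard
  simp only [Subtype.ext_iff] at he
  have hlen : ∀ v : Fn w (n+1), v.val.length = n + 1 := fun v => v.2.2
  have hane : a.val ≠ [] := by
    intro h0
    have := hlen a; rw [h0] at this; simp at this
  have hbne : b.val ≠ [] := by
    intro h0
    have := hlen b; rw [h0] at this; simp at this
  have ha : a.val = a.val.head hane :: a.val.tail := by simp
  have hb : b.val = b.val.head hbne :: b.val.tail := by simp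
  have hheads : a.val.head hane ≠ b.val.head hbne := by
    intro hh
    apply hab
    apply Subtype.ext
    rw [ha, hb, hh, he]
  refine ⟨a.val.tail, by simp [List.length_tail, hlen a], fun c => ?_⟩
  rcases fin2_cover _ _ c hheads with rfl | rfl
  · rw [← ha]; exact a.2.1
  · rw [he, ← hb]; exact b.2.1

lemma ls_unique {u u' : List (Fin 2)} (hu : IsLS w u) (hu' : IsLS w u')
    (hl : u.length = u'.length) : u = u' := by
  by_contra hne
  set n := u.length with hn
  -- choice of left extensions
  have hcl : ∀ v : Fn w n, ∃ c : Fin 2, (c :: v.val) ∈ factorsOf w :=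
    fun v => lext hs v.2.1
  obtain ⟨cl, hclspec⟩ : ∃ cl : Fn w n → Fin 2, ∀ v, ((cl v) :: v.val) ∈ factorsOf w :=
    ⟨fun v => (hcl v).choose, fun v => (hcl v).choose_spec⟩
  have humem : u ∈ Fn w n := ⟨hu.mem, rfl⟩
  have humem' : u' ∈ Fn w n := ⟨hu'.mem, hl.symm⟩
  set ub : Fn w n := ⟨u, humem⟩ with hub
  set ub' : Fn w n := ⟨u', humem'⟩ with hub'
  have hinj : Function.Injective
      (Sum.elim (fun v : Fn w n => (⟨(cl v) :: v.val, hclspec v, by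
          rw [List.length_cons, v.2.2]⟩ : Fn w (n+1)))
        (fun b : Bool => cond b
          (⟨flip (cl ub) :: u, hu _, by rw [List.length_cons]⟩ : Fn w (n+1))
          (⟨flip (cl ub') :: u', hu' _, by rw [List.length_cons, ← hl]⟩ : Fn w (n+1)))) := by
    rintro (v₁ | b₁) (v₂ | b₂) hv
    · simp only [Sum.elim_inl, Subtype.ext_iff, List.cons.injEq] at hv
      exact congrArg Sum.inl (Subtype.ext hv.2)
    · exfalso
      cases b₂ <;>
        simp only [Sum.elim_inl, Sum.elim_inr, Bool.cond_true, Bool.cond_false,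
          Subtype.ext_iff, List.cons.injEq] at hv
      · have : v₁ = ub' := Subtype.ext hv.2
        rw [this] at hv
        exact flip_ne _ hv.1.symm
      · have : v₁ = ub := Subtype.ext hv.2
        rw [this] at hv
        exact flip_ne _ hv.1.symm
    · exfalso
      cases b₁ <;>
        simp only [Sum.elim_inl, Sum.elim_inr, Bool.cond_true, Bool.cond_false,
          Subtype.ext_iff, List.cons.injEq] at hv
      · have : v₂ = ub' := Subtype.ext hv.2.symm
        rw [this] at hv
        exact flip_ne _ hv.1
      · have : v₂ = ub := Subtype.ext hv.2.symm
        rw [this] at hv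
        exact flip_ne _ hv.1
    · cases b₁ <;> cases b₂ <;>
        simp only [Sum.elim_inr, Bool.cond_true, Bool.cond_false,
          Subtype.ext_iff, List.cons.injEq] at hv
      · rfl
      · exact absurd hv.2.symm hne
      · exact absurd hv.2 hne
      · rfl
  have hcard := Nat.card_le_card_of_injective _ hinj
  rw [Nat.card_sum] at hcard
  have h1 : pc w n + Nat.card Bool ≤ pc w (n + 1) := hcard
  rw [pc_w hs, pc_w hs, Nat.card_eq_fintype_card] at h1
  simp at h1

omit hs in
lemma fin2_eq_of_ne_flip : ∀ {x y : Fin 2}, x ≠ flip y → x = y := by decide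

lemma no_const_tail (c : Fin 2) (N : ℕ) (h : ∀ t, N ≤ t → w t = c) : False := by
  apply aperiodic hs
  exact ⟨1, one_pos, N, fun i hi => by rw [h _ (by omega), h _ hi]⟩

lemma exists_ne_letter (c : Fin 2) (N : ℕ) : ∃ t, N ≤ t ∧ w t = flip c := by
  by_contra hc
  push_neg at hc
  apply no_const_tail hs c N
  intro t ht
  exact fin2_eq_of_ne_flip (hc t ht)

/-- The core combinatorial lemma: the left-special word cannot be two-sided
extendable with a common letter two back. -/
lemma core (a : Fin 2) (v : ℕ → Fin 2)
    (H : ∀ (n : ℕ) (c : Fin 2), (a :: c :: win v 0 n) ∈ factorsOf w) : False := by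
  classical
  have hls : ∀ n, IsLS w (win v 0 n) := fun n c =>
    fac_of_suffix (List.suffix_cons a _) (H n c)
  by_cases hconst : ∀ j, v j = a
  · -- constant case
    have hwin : ∀ n, win v 0 n = List.replicate n a := by
      intro n
      apply List.ext_getElem (by simp)
      intro j hj1 hj2
      simp [hconst]
    have hrls : ∀ n, IsLS w (List.replicate n a) := fun n => by
      rw [← hwin n]; exact hls n
    have hD : ∀ g, (List.replicate g a ++ [flip a]) ∈ factorsOf w := by
      intro g
      obtain ⟨i, hi⟩ := (hrls g).mem
      have hi' : List.replicate g a = win w i g := by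
        have hlen : (List.replicate g a).length = g := by simp
        rw [hlen] at hi
        exact hi
      have hlet : ∀ j, j < g → w (i + j) = a := by
        intro j hj
        have := List.getElem_of_eq hi' (show j < (List.replicate g a).length by simp [hj])
        simp at this
        exact this.symm
      obtain ⟨t, ht, htv⟩ := exists_ne_letter hs a (i + g)
      have hex : ∃ s, w (i + g + s) = flip a :=
        ⟨t - (i + g), by rw [show i + g + (t - (i+g)) = t by omega]; exact htv⟩
      set s₀ := Nat.find hex with hs₀
      have hspec : w (i + g + s₀) = flip a := Nat.find_spec hex
      have hmin : ∀ s, s < s₀ → w (i + g + s) ≠ flip a := fun s hlt => Nat.find_min hex hlt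
      have hwin2 : win w i (g + s₀ + 1) = List.replicate (g + s₀) a ++ [flip a] := by
        apply List.ext_getElem (by simp)
        intro j hj1 hj2
        simp only [getElem_win]
        rcases Nat.lt_or_ge j (g + s₀) with hj | hj
        · rw [List.getElem_append_left (by simp [hj])]
          rw [List.getElem_replicate]
          rcases Nat.lt_or_ge j g with hj' | hj'
          · exact hlet j hj'
          · have := hmin (j - g) (by omega)
            rw [show i + g + (j - g) = i + j by omega] at this
            exact fin2_eq_of_ne_flip this
        · have hj' : j = g + s₀ := by
            have : j < g + s₀ + 1 := by simpa using hj1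
            omega
          rw [List.getElem_append_right (by simp [hj'])]
          subst hj'
          rw [show i + (g + s₀) = i + g + s₀ by omega]
          simpa using hspec
      have hsuf : (List.replicate g a ++ [flip a]) <:+
          (List.replicate (g + s₀) a ++ [flip a]) := by
        refine ⟨List.replicate s₀ a, ?_⟩
        rw [← List.append_assoc, ← List.replicate_add, show s₀ + g = g + s₀ by omega]
      apply fac_of_suffix hsuf
      rw [← hwin2]
      exact win_mem _ _
    have hE : ∀ g, (flip a :: (List.replicate g a ++ [flip a])) ∉ factorsOf w := by
      intro g hmem
      have hy : IsLS w (List.replicate g a ++ [flip a]) := by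
        intro c
        rcases fin2_cover (flip a) a c (flip_ne a) with h | h
        · rw [h]; exact hmem
        · rw [h]
          have he : a :: (List.replicate g a ++ [flip a]) =
              List.replicate (g+1) a ++ [flip a] := by
            rw [← List.cons_append, ← List.replicate_succ]
          rw [he]
          exact hD (g+1)
      have hx : IsLS w (List.replicate (g+1) a) := hrls (g+1)
      have heq := ls_unique hs hy hx (by simp)
      have hg := List.getElem_of_eq heq
        (show g < (List.replicate g a ++ [flip a]).length by simp)
      rw [List.getElem_append_right (by simp)] at hg
      simp at hg
      exact flip_ne a hg
    obtain ⟨t₁, _, ht₁⟩ := exists_ne_letter hs a 0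
    obtain ⟨t₂, ht₂, ht₂v⟩ := exists_ne_letter hs a (t₁ + 1)
    have hex2 : ∃ s, w (t₁ + 1 + s) = flip a :=
      ⟨t₂ - (t₁ + 1), by rw [show t₁ + 1 + (t₂ - (t₁+1)) = t₂ by omega]; exact ht₂v⟩
    set s₁ := Nat.find hex2 with hs₁
    have hspec2 : w (t₁ + 1 + s₁) = flip a := Nat.find_spec hex2
    have hmin2 : ∀ s, s < s₁ → w (t₁ + 1 + s) ≠ flip a := fun s hlt => Nat.find_min hex2 hlt
    have hwin3 : win w t₁ (s₁ + 2) = flip a :: (List.replicate s₁ a ++ [flip a]) := by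
      apply List.ext_getElem (by simp)
      intro j hj1 hj2
      simp only [getElem_win]
      cases j with
      | zero => simpa using ht₁
      | succ j' =>
        rw [List.getElem_cons_succ]
        have hj'b : j' < s₁ + 1 := by
          have : j' + 1 < s₁ + 2 := by simpa using hj1
          omega
        rcases Nat.lt_or_ge j' s₁ with hj | hj
        · rw [List.getElem_append_left (by simp [hj]), List.getElem_replicate]
          have := hmin2 j' hj
          rw [show t₁ + 1 + j' = t₁ + (j' + 1) by omega] at this
          exact fin2_eq_of_ne_flip this
        · have hj' : j' = s₁ := by omega
          rw [List.getElem_append_right (by simp [hj'])]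
          subst hj'
          rw [show t₁ + (s₁ + 1) = t₁ + 1 + s₁ by omega]
          simpa using hspec2
    exact hE s₁ (by rw [← hwin3]; exact win_mem _ _)
  · -- nonconstant case
    push_neg at hconst
    have hexK : ∃ j, v j ≠ a := hconst
    set K := Nat.find hexK with hK
    have hvK : v K ≠ a := Nat.find_spec hexK
    have hKmin : ∀ j, j < K → v j = a := fun j hj => by
      have := Nat.find_min hexK hj
      simpa using this
    have hvKf : v K = flip a := eq_flip_of_ne hvK
    have hwinK : win v 0 K = List.replicate K a := by
      apply List.ext_getElem (by simp)
      intro j hj1 hj2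
      rw [getElem_win, List.getElem_replicate]
      simpa using hKmin j (by simpa using hj1)
    have hwinK1 : win v 0 (K+1) = List.replicate K a ++ [flip a] := by
      apply List.ext_getElem (by simp)
      intro j hj1 hj2
      rw [getElem_win]
      have hjb : j < K + 1 := by simpa using hj1
      rcases Nat.lt_or_ge j K with hj | hj
      · rw [List.getElem_append_left (by simp [hj]), List.getElem_replicate]
        simpa using hKmin j hj
      · have hj' : j = K := by omega
        rw [List.getElem_append_right (by simp [hj'])]
        subst hj'
        simpa using hvKf
    have hA : List.replicate (K+2) a ∈ factorsOf w := by
      have := H K a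
      rw [hwinK] at this
      have he : a :: a :: List.replicate K a = List.replicate (K+2) a := by
        rw [show K + 2 = (K+1)+1 by omega, List.replicate_succ, List.replicate_succ]
      rw [← he]
      exact this
    have hC : (flip a :: List.replicate (K+1) a) ∈ factorsOf w := by
      by_contra NC
      have hC1 : ∀ m, List.replicate (K+2+m) a ∈ factorsOf w := by
        intro m
        induction m with
        | zero => exact hA
        | succ m ih =>
          obtain ⟨i, hi, he⟩ := recurrence hs ih 1
          have he' : List.replicate (K+2+m) a = win w i (K+2+m) := by
            have hlen : (List.replicate (K+2+m) a).length = K+2+m := by simp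
            rw [hlen] at he
            exact he
          have hz : win w (i-1) (K+2+m+1) = w (i-1) :: List.replicate (K+2+m) a := by
            rw [win_succ_left, show i - 1 + 1 = i by omega, ← he']
          rcases fin2_cover a (flip a) (w (i-1)) (Ne.symm (flip_ne a)) with hwa | hwa
          · have he2 : List.replicate (K+2+(m+1)) a = win w (i-1) (K+2+m+1) := by
              rw [hz, hwa, show K+2+(m+1) = (K+2+m)+1 by omega, List.replicate_succ]
            rw [he2]
            exact win_mem _ _
          · exfalso
            apply NC
            have hpre : (flip a :: List.replicate (K+1) a) <+:
                (w (i-1) :: List.replicate (K+2+m) a) := by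
              rw [hwa]
              refine ⟨List.replicate (m+1) a, ?_⟩
              rw [List.cons_append, ← List.replicate_add,
                show K + 1 + (m+1) = K+2+m by omega]
            apply fac_of_prefix hpre
            rw [← hz]
            exact win_mem _ _
      obtain ⟨q₀, _, hq₀⟩ := exists_ne_letter hs a 0
      have hgap : ∀ q, w q = flip a → ∃ j, 1 ≤ j ∧ j ≤ K+1 ∧ w (q+j) = flip a := by
        intro q hq
        by_contra hcj
        push_neg at hcj
        apply NC
        have he3 : win w q (K+2) = flip a :: List.replicate (K+1) a := by
          apply List.ext_getElem (by simp)
          intro j hj1 hj2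
          rw [getElem_win]
          cases j with
          | zero => simpa using hq
          | succ j' =>
            rw [List.getElem_cons_succ, List.getElem_replicate]
            have hjb : j' + 1 ≤ K + 1 := by
              have : j' + 1 < K + 2 := by simpa using hj1
              omega
            exact fin2_eq_of_ne_flip (hcj (j'+1) (by omega) hjb)
        rw [← he3]
        exact win_mem _ _
      have hrep : List.replicate (K+1) a ∈ factorsOf w := by
        apply fac_of_prefix _ hA
        exact ⟨[a], List.replicate_succ'.symm⟩
      obtain ⟨p, hppos, hpe⟩ := recurrence hs hrep (q₀ + 1)
      have hpe' : List.replicate (K+1) a = win w p (K+1) := by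
        have hlen : (List.replicate (K+1) a).length = K+1 := by simp
        rw [hlen] at hpe
        exact hpe
      have hplet : ∀ t, t ≤ K → w (p + t) = a := by
        intro t ht
        have := List.getElem_of_eq hpe'
          (show t < (List.replicate (K+1) a).length by simp; omega)
        simp at this
        exact this.symm
      set q' := Nat.findGreatest (fun q => w q = flip a) (p-1) with hq'
      have hq'spec : w q' = flip a :=
        Nat.findGreatest_spec (P := fun q => w q = flip a) (n := p - 1) (m := q₀)
          (by omega) hq₀
      have hq'le : q' ≤ p - 1 := Nat.findGreatest_le _
      obtain ⟨j, hj1, hj2, hj3⟩ := hgap q' hq'spec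
      rcases Nat.lt_or_ge (q' + j) p with hlt | hge
      · exact (Nat.findGreatest_is_greatest (P := fun q => w q = flip a) (n := p - 1)
          (k := q' + j) (by omega) (by omega)) hj3
      · have ht : q' + j - p ≤ K := by omega
        have hlet2 := hplet (q' + j - p) ht
        rw [show p + (q' + j - p) = q' + j by omega] at hlet2
        rw [hlet2] at hj3
        exact flip_ne a hj3.symm
    -- final contradiction
    have hxls : IsLS w (List.replicate (K+1) a) := by
      intro c
      rcases fin2_cover a (flip a) c (Ne.symm (flip_ne a)) with h | h
      · rw [h]
        have he4 : a :: List.replicate (K+1) a = List.replicate (K+2) a := by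
          rw [show K + 2 = (K+1)+1 by omega]
          simp [List.replicate_succ]
        rw [he4]
        exact hA
      · rw [h]; exact hC
    have hyls : IsLS w (List.replicate K a ++ [flip a]) := by
      rw [← hwinK1]
      exact hls (K+1)
    have heq := ls_unique hs hxls hyls (by simp)
    have hg := List.getElem_of_eq heq
      (show K < (List.replicate (K+1) a).length by simp)
    rw [List.getElem_replicate, List.getElem_append_right (by simp)] at hg
    simp at hg
    exact flip_ne a hg.symm

omit hs in
lemma ls_take {u : List (Fin 2)} (h : IsLS w u) (n : ℕ) : IsLS w (u.take n) := by
  intro c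
  have : (c :: u.take n) = (c :: u).take (n + 1) := rfl
  rw [this]
  exact fac_of_prefix (List.take_prefix _ _) (h c)

/-- the left-special word of length `n` -/
def Lword (n : ℕ) : List (Fin 2) := (ls_exists hs n).choose

lemma Lword_len (n : ℕ) : (Lword hs n).length = n := (ls_exists hs n).choose_spec.1

lemma Lword_ls (n : ℕ) : IsLS w (Lword hs n) := (ls_exists hs n).choose_spec.2

lemma Lword_mem (n : ℕ) : Lword hs n ∈ factorsOf w := (Lword_ls hs n).mem

lemma Lword_take {m n : ℕ} (h : m ≤ n) : (Lword hs n).take m = Lword hs m := by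
  induction n with
  | zero =>
    have : m = 0 := by omega
    subst this
    rw [List.take_zero]
    exact (List.length_eq_zero_iff.mp (Lword_len hs 0)).symm
  | succ n ih =>
    rcases Nat.lt_or_ge m (n + 1) with h' | h'
    · have h1 : (Lword hs (n+1)).take n = Lword hs n := by
        apply ls_unique hs (ls_take (Lword_ls hs (n+1)) n) (Lword_ls hs n)
        rw [List.length_take, Lword_len, Lword_len]
        omega
      have h2 : (Lword hs (n+1)).take m = ((Lword hs (n+1)).take n).take m := by
        rw [List.take_take, Nat.min_eq_left (by omega)]
      rw [h2, h1]
      exact ih (by omega)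
    · have : m = n + 1 := by omega
      subst this
      exact List.take_of_length_le (by rw [Lword_len])

/-- the left-special infinite word -/
def lam (k : ℕ) : Fin 2 := (Lword hs (k + 1)).getD k 0

lemma lam_eq {n k : ℕ} (h : k < n) : (Lword hs n).getD k 0 = lam hs k := by
  have h1 : Lword hs (k+1) = (Lword hs n).take (k+1) := (Lword_take hs (by omega)).symm
  rw [lam, h1]
  have hlen : k < ((Lword hs n).take (k+1)).length := by
    rw [List.length_take, Lword_len]; omega
  have hlen2 : k < (Lword hs n).length := by rw [Lword_len]; omega
  rw [List.getD_eq_getElem _ _ hlen2, List.getD_eq_getElem _ _ hlen, List.getElem_take]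

lemma win_lam (n : ℕ) : win (lam hs) 0 n = Lword hs n := by
  apply List.ext_getElem (by simp [Lword_len])
  intro j hj1 hj2
  rw [getElem_win]
  have hjn : j < n := by simpa using hj1
  have := lam_eq hs hjn
  rw [List.getD_eq_getElem _ _ (by rw [Lword_len]; omega)] at this
  have e : 0 + j = j := by omega
  rw [e]
  exact this.symm

lemma win_lam_mem (i n : ℕ) : win (lam hs) i n ∈ factorsOf w := by
  have h1 : (win (lam hs) 0 (i + n)).drop i = win (lam hs) i n := by
    rw [drop_win]
    congr 1 <;> omega
  rw [← h1, win_lam]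
  exact fac_of_suffix (List.drop_suffix _ _) (Lword_mem hs _)

lemma cons_win_lam_mem (c : Fin 2) (n : ℕ) : (c :: win (lam hs) 0 n) ∈ factorsOf w := by
  rw [win_lam]
  exact Lword_ls hs n c

end Sturm2

section Alg

variable (F : Type) [Field F] {w : ℕ → Fin 2}

open Classical in
/-- the shift operator sending basis vector `v` to `c :: v` (or `0`). -/
def shiftOp (w : ℕ → Fin 2) (c : Fin 2) :
    Module.End F (List (Fin 2) →₀ F) :=
  Finsupp.lsum F (fun v => if (c :: v) ∈ factorsOf w then Finsupp.lsingle (c :: v) else 0)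

open Classical in
lemma shiftOp_single (c : Fin 2) (v : List (Fin 2)) (b : F) :
    shiftOp F w c (Finsupp.single v b) =
      if (c :: v) ∈ factorsOf w then Finsupp.single (c :: v) b else 0 := by
  rw [shiftOp, Finsupp.lsum_single]
  split_ifs with h
  · simp [Finsupp.lsingle]
  · simp

/-- the monoid homomorphism from the free monoid into endomorphisms -/
def phi (w : ℕ → Fin 2) : FreeMonoid (Fin 2) →* Module.End F (List (Fin 2) →₀ F) :=
  FreeMonoid.lift (fun c => shiftOp F w c)

open Classical in
lemma phi_act (u v : List (Fin 2)) (hu : u ≠ []) :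
    phi F w (FreeMonoid.ofList u) (Finsupp.single v (1 : F)) =
      if (u ++ v) ∈ factorsOf w then Finsupp.single (u ++ v) (1 : F) else 0 := by
  induction u with
  | nil => exact absurd rfl hu
  | cons c u' ih =>
    rw [FreeMonoid.ofList_cons, map_mul]
    rcases List.eq_nil_or_concat u' with rfl | hne
    · -- u' = []
      rw [show FreeMonoid.ofList ([] : List (Fin 2)) = 1 from rfl, map_one, mul_one]
      show shiftOp F w c (Finsupp.single v 1) = _
      rw [shiftOp_single]
      rfl
    · have hu' : u' ≠ [] := by
        rintro rfl
        obtain ⟨L, b, hLb⟩ := hne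
        exact absurd hLb.symm (by simp)
      have hih := ih hu'
      show shiftOp F w c (phi F w (FreeMonoid.ofList u') (Finsupp.single v 1)) = _
      rw [hih]
      by_cases h1 : (u' ++ v) ∈ factorsOf w
      · rw [if_pos h1, shiftOp_single]
        have : c :: (u' ++ v) = (c :: u') ++ v := rfl
        rw [this]
      · rw [if_neg h1, map_zero, List.cons_append]
        rw [if_neg (fun hc => h1 (fac_of_suffix (List.suffix_cons c (u' ++ v)) hc))]

lemma phi_zero_of_not_fac {u : List (Fin 2)} (hu : u ∉ factorsOf w) :
    phi F w (FreeMonoid.ofList u) = 0 := by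
  have hne : u ≠ [] := by
    rintro rfl
    exact hu ⟨0, rfl⟩
  apply Finsupp.lhom_ext
  intro v b
  have h1 : (Finsupp.single v b : List (Fin 2) →₀ F) = b • Finsupp.single v (1:F) := by
    rw [Finsupp.smul_single, smul_eq_mul, mul_one]
  rw [h1, map_smul, phi_act F u v hne]
  rw [if_neg (fun hc => hu (fac_of_prefix (List.prefix_append u v) hc))]
  simp

lemma phi_compat :
    ∀ a b, monRel F ((factorsOf w)ᶜ) a b →
      (MonoidAlgebra.lift F _ (FreeMonoid (Fin 2)) (phi F w)) a =
      (MonoidAlgebra.lift F _ (FreeMonoid (Fin 2)) (phi F w)) b := by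
  rintro a b ⟨⟨u, huW, rfl⟩, rfl⟩
  rw [map_zero]
  rw [wordElem, MonoidAlgebra.lift_of]
  exact phi_zero_of_not_fac F huW

lemma mono_zero_of_not_fac {u : List (Fin 2)} (hu : u ∉ factorsOf w) :
    mono F ((factorsOf w)ᶜ) u = 0 := by
  have h1 : monRel F ((factorsOf w)ᶜ) (wordElem F u) 0 := ⟨⟨u, hu, rfl⟩, rfl⟩
  have h2 := RingQuot.mkAlgHom_rel F h1
  rw [mono, monAlgPi, h2, map_zero]

lemma mono_ne_zero_of_fac {u : List (Fin 2)} (hu : u ∈ factorsOf w) :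
    mono F ((factorsOf w)ᶜ) u ≠ 0 := by
  intro h0
  set ψ := RingQuot.liftAlgHom F ⟨(MonoidAlgebra.lift F _ (FreeMonoid (Fin 2)) (phi F w)), phi_compat F⟩
  have hcomm : ∀ z, ψ (RingQuot.mkAlgHom F (monRel F ((factorsOf w)ᶜ)) z) =
      (MonoidAlgebra.lift F _ (FreeMonoid (Fin 2)) (phi F w)) z := fun z =>
    RingQuot.liftAlgHom_mkAlgHom_apply _ _ _ _
  have h2 : (MonoidAlgebra.lift F _ (FreeMonoid (Fin 2)) (phi F w)) (wordElem F u) = 0 := by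
    rw [← hcomm]
    show ψ (mono F ((factorsOf w)ᶜ) u) = 0
    rw [h0, map_zero]
  rw [wordElem, MonoidAlgebra.lift_of] at h2
  have h3 : phi F w (FreeMonoid.ofList u) (Finsupp.single [] (1:F)) = Finsupp.single u 1 := by
    rcases List.eq_nil_or_concat u with rfl | hne
    · show (1 : Module.End F _) (Finsupp.single ([] : List (Fin 2)) (1:F)) = _
      rfl
    · have hne' : u ≠ [] := by
        obtain ⟨L, b, hLb⟩ := hne
        rw [hLb]
        simp
      rw [phi_act F u [] hne', List.append_nil, if_pos hu]
  rw [h2] at h3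
  simp only [LinearMap.zero_apply] at h3
  have : (Finsupp.single u (1:F)) ≠ 0 := by
    simp [Finsupp.single_eq_zero]
  exact this h3.symm

end Alg

section Final

variable (F : Type) [Field F] {w : ℕ → Fin 2}
  (hs : ∀ n : ℕ, 1 ≤ n →
    Nat.card { u : List (Fin 2) // u ∈ factorsOf w ∧ u.length = n } = n + 1)

lemma selectsFrom_iff {C : ℕ → Set (Fin 2)} {i : ℕ} {u : List (Fin 2)} :
    SelectsFrom C i u ↔ ∀ (k : ℕ) (h : k < u.length), u[k] ∈ C (i + k) := by
  unfold SelectsFrom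
  simp only [List.get_eq_getElem]

lemma tree_sel_mem {C : ℕ → Set (Fin 2)} (hC : IsTree F ((factorsOf w)ᶜ) C)
    {i : ℕ} {u : List (Fin 2)} (h : SelectsFrom C i u) : u ∈ factorsOf w := by
  by_contra hmem
  exact hC.2 i u h (mono_zero_of_not_fac F hmem)

lemma ncard_univ_fin2 : (Set.univ : Set (Fin 2)).ncard = 2 := by
  rw [Set.ncard_univ, Nat.card_eq_fintype_card]
  simp

include hs in
lemma tree_singleton {C : ℕ → Set (Fin 2)} (hC : IsTree F ((factorsOf w)ᶜ) C)
    (i : ℕ) (hi : 1 ≤ i) : (C i).ncard = 1 := by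
  obtain ⟨i', rfl⟩ : ∃ i', i = i' + 1 := ⟨i - 1, by omega⟩
  have hne := hC.1
  have hsmem : ∀ j, (hne j).choose ∈ C j := fun j => (hne j).choose_spec
  set s : ℕ → Fin 2 := fun j => (hne j).choose with hsdef
  rw [Set.ncard_eq_one]
  refine ⟨s (i'+1), ?_⟩
  ext x
  simp only [Set.mem_singleton_iff]
  constructor
  · intro hx
    by_contra hxe
    have hboth : ∀ c : Fin 2, c ∈ C (i'+1) := by
      intro c
      rcases fin2_cover x (s (i'+1)) c hxe with h | h
      · rw [h]; exact hx
      · rw [h]; exact hsmem (i'+1)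
    apply core hs (s i') (fun t => s (i' + 2 + t))
    intro n c
    apply tree_sel_mem F hC (i := i')
    rw [selectsFrom_iff]
    intro k hk
    match k with
    | 0 =>
      simpa using hsmem i'
    | 1 =>
      simpa using hboth c
    | (j+2) =>
      have hj : j < n := by
        simp only [List.length_cons, length_win] at hk
        omega
      have hg : (s i' :: c :: win (fun t => s (i'+2+t)) 0 n)[j+2]'(by
          simp only [List.length_cons, length_win]; omega) = s (i'+2+j) := by
        simp only [List.getElem_cons_succ]
        rw [getElem_win (h := by simpa using hj)]
        simp
      rw [hg]
      have e : i' + (j + 2) = i' + 2 + j := by omega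
      rw [e]
      exact hsmem _
  · rintro rfl
    exact hsmem _

/-- the unique tree with doubled root -/
def exTree : ℕ → Set (Fin 2) := fun i => if i = 0 then Set.univ else {lam hs (i-1)}

include hs in
lemma exTree_sel {i : ℕ} {u : List (Fin 2)} (h : SelectsFrom (exTree hs) i u) :
    u ∈ factorsOf w := by
  rw [selectsFrom_iff] at h
  rcases Nat.eq_zero_or_pos i with rfl | hi
  · cases u with
    | nil => exact ⟨0, rfl⟩
    | cons c rest =>
      have hrest : rest = win (lam hs) 0 rest.length := by
        apply List.ext_getElem (by simp)
        intro j hj1 hj2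
        rw [getElem_win]
        have hmem := h (j+1) (by simpa using hj1)
        simp only [List.getElem_cons_succ] at hmem
        have he : exTree hs (0 + (j+1)) = {lam hs j} := by
          simp [exTree]
        rw [he, Set.mem_singleton_iff] at hmem
        rw [hmem]
        congr 1
        omega
      rw [hrest]
      exact cons_win_lam_mem hs c rest.length
  · have hu : u = win (lam hs) (i-1) u.length := by
      apply List.ext_getElem (by simp)
      intro j hj1 hj2
      rw [getElem_win]
      have hmem := h j hj1
      have he : exTree hs (i + j) = {lam hs (i + j - 1)} := by
        rw [exTree, if_neg (by omega)]
      rw [he, Set.mem_singleton_iff] at hmem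
      rw [hmem]
      congr 1
      omega
    rw [hu]
    exact win_lam_mem hs _ _

include hs in
lemma exTree_isTree : IsTree F ((factorsOf w)ᶜ) (exTree hs) := by
  constructor
  · intro i
    by_cases h : i = 0 <;> simp [exTree, h]
  · intro i u hsel
    exact mono_ne_zero_of_fac F (exTree_sel hs hsel)

include hs in
lemma exTree_ncard0 : (exTree hs 0).ncard = 2 := by
  have : exTree hs 0 = Set.univ := by simp [exTree]
  rw [this]
  exact ncard_univ_fin2

include hs in
lemma tree_unique {C : ℕ → Set (Fin 2)} (hC : IsTree F ((factorsOf w)ᶜ) C)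
    (h2 : (C 0).ncard = 2) : C = exTree hs := by
  have h0 : C 0 = Set.univ := by
    apply Set.eq_of_subset_of_ncard_le (Set.subset_univ _) _ Set.finite_univ
    rw [ncard_univ_fin2, h2]
  have hsing : ∀ j, ∃ y, C (j+1) = {y} := fun j =>
    Set.ncard_eq_one.mp (tree_singleton F hs hC (j+1) (by omega))
  obtain ⟨y, hy⟩ : ∃ y : ℕ → Fin 2, ∀ j, C (j+1) = {y j} :=
    ⟨fun j => (hsing j).choose, fun j => (hsing j).choose_spec⟩
  have hwls : ∀ n, win y 0 n = Lword hs n := by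
    intro n
    apply ls_unique hs ?_ (Lword_ls hs n) (by simp [Lword_len])
    intro c
    apply tree_sel_mem F hC (i := 0)
    rw [selectsFrom_iff]
    intro k hk
    match k with
    | 0 =>
      simp only [List.getElem_cons_zero]
      rw [Nat.add_zero, h0]
      trivial
    | (j+1) =>
      have hj : j < n := by
        simp only [List.length_cons, length_win] at hk
        omega
      simp only [List.getElem_cons_succ]
      rw [getElem_win (h := by simpa using hj)]
      rw [Nat.zero_add, Nat.zero_add, hy j]
      rfl
  funext i
  rcases Nat.eq_zero_or_pos i with rfl | hi
  · rw [h0]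
    simp [exTree]
  · obtain ⟨j, rfl⟩ : ∃ j, i = j + 1 := ⟨i-1, by omega⟩
    rw [hy j]
    have hyl : y j = lam hs j := by
      have h1 := hwls (j+1)
      have h2' := List.getElem_of_eq h1 (show j < (win y 0 (j+1)).length by simp)
      rw [getElem_win] at h2'
      have h3 : (Lword hs (j+1)).getD j 0 = lam hs j := lam_eq hs (by omega)
      rw [List.getD_eq_getElem _ _ (by rw [Lword_len]; omega)] at h3
      rw [← h3]
      rw [Nat.zero_add] at h2'
      exact h2'
    rw [hyl]
    have : exTree hs (j+1) = {lam hs j} := by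
      rw [exTree, if_neg (by omega)]
      norm_num
    rw [this]

end Final

end St18

/-- Let `w` be a Sturmian word over the two-letter alphabet
(`p_w(n) = n + 1` for all `n ≥ 1`) and `A = A_w` the associated monomial algebra
(a monomial `ℙ¹`).  Then every tree `(C_i)` over `A` has `|C_0| ≤ 2` and
`|C_i| = 1` for all `i ≥ 1`, and there is exactly one tree over `A` with
`|C_0| = 2`. -/
theorem statement18 (F : Type) [Field F] (w : ℕ → Fin 2)
    (hsturm : ∀ n : ℕ, 1 ≤ n →
        Nat.card { u : List (Fin 2) // u ∈ factorsOf w ∧ u.length = n } = n + 1) :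
    (∀ C : ℕ → Set (Fin 2), IsTree F ((factorsOf w)ᶜ) C →
        (C 0).ncard ≤ 2 ∧ ∀ i : ℕ, 1 ≤ i → (C i).ncard = 1) ∧
      (∃! C : ℕ → Set (Fin 2),
        IsTree F ((factorsOf w)ᶜ) C ∧ (C 0).ncard = 2) := by
  classical
  constructor
  · intro C hC
    constructor
    · calc (C 0).ncard ≤ (Set.univ : Set (Fin 2)).ncard :=
            Set.ncard_le_ncard (Set.subset_univ _) Set.finite_univ
        _ = 2 := St18.ncard_univ_fin2
    · intro i hi
      exact St18.tree_singleton F hsturm hC i hi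
  · refine ⟨St18.exTree hsturm, ⟨St18.exTree_isTree F hsturm, St18.exTree_ncard0 hsturm⟩, ?_⟩
    rintro C ⟨hC, h2⟩
    exact St18.tree_unique F hsturm hC h2
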